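/- Let B be the closed disc of center z₀ and radius τ, and let ω* be a positive finite Borel measure on B. Define u(z) = ∫_B log|z−w| dω*(w). Then for every z with |z−z₀| > τ, the radial derivative (with respect to r = |z−z₀|) satisfies ∂u/∂r(z) ≥ (√(|z−z₀|−τ)/√(|z−z₀|+τ)) · ω*(B)/|z−z₀| ≥ ω*(B)/|z−z₀| − τ·ω*(B)/|z−z₀|². In particular ∂u/∂r(z) ≥ 0. -/

import Mathlib

open MeasureTheory

noncomputable def dlog (y : ℂ) : ℂ →L[ℝ] ℝ :=
  (Complex.normSq y)⁻¹ • (y.re • Complex.reCLM + y.im • Complex.imCLM)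

lemma dlog_apply (y v : ℂ) :
    dlog y v = (Complex.normSq y)⁻¹ * (y.re * v.re + y.im * v.im) := by
  simp [dlog]; ring

lemma cs_aux (y v : ℂ) :
    |y.re * v.re + y.im * v.im| ≤ ‖y‖ * ‖v‖ := by
  have h : y.re * v.re + y.im * v.im = ((starRingEnd ℂ) y * v).re := by
    simp [Complex.mul_re]
  rw [h]
  calc |((starRingEnd ℂ) y * v).re| ≤ ‖(starRingEnd ℂ) y * v‖ :=
        Complex.abs_re_le_norm _
    _ = ‖y‖ * ‖v‖ := by
        rw [norm_mul, Complex.norm_conj]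

lemma dlog_norm (y : ℂ) : ‖dlog y‖ ≤ (‖y‖)⁻¹ := by
  rcases eq_or_ne y 0 with rfl | hy
  · simp [dlog]
  · have hy' : 0 < ‖y‖ := norm_pos_iff.mpr hy
    have hns0 : (0:ℝ) ≤ (Complex.normSq y)⁻¹ := inv_nonneg.2 (Complex.normSq_nonneg y)
    apply ContinuousLinearMap.opNorm_le_bound _ (by positivity)
    intro v
    rw [dlog_apply]
    have h1 : |(Complex.normSq y)⁻¹ * (y.re * v.re + y.im * v.im)|
        ≤ (Complex.normSq y)⁻¹ * (‖y‖ * ‖v‖) := by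
      rw [abs_mul, abs_of_nonneg hns0]
      exact mul_le_mul_of_nonneg_left (cs_aux y v) hns0
    have h2 : (Complex.normSq y)⁻¹ * (‖y‖ * ‖v‖)
        = (‖y‖)⁻¹ * ‖v‖ := by
      rw [← Complex.sq_norm]
      field_simp
    rw [Real.norm_eq_abs]
    rw [h2] at h1
    simpa using h1

lemma hasFDerivAt_log_abs (w x : ℂ) (h : x ≠ w) :
    HasFDerivAt (fun y => Real.log (‖y - w‖)) (dlog (x - w)) x := by
  have hne : x - w ≠ 0 := sub_ne_zero.mpr h
  have hns : Complex.normSq (x - w) ≠ 0 := by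
    simpa [Complex.normSq_eq_zero] using hne
  have hre : HasFDerivAt (fun y : ℂ => (y - w).re) (Complex.reCLM : ℂ →L[ℝ] ℝ) x := by
    exact (Complex.reCLM.hasFDerivAt (x := x - w)).comp x
      ((hasFDerivAt_id x).sub_const w)
  have him : HasFDerivAt (fun y : ℂ => (y - w).im) (Complex.imCLM : ℂ →L[ℝ] ℝ) x := by
    exact (Complex.imCLM.hasFDerivAt (x := x - w)).comp x
      ((hasFDerivAt_id x).sub_const w)
  have h1 : HasFDerivAt (fun y => Complex.normSq (y - w))
      ((x - w).re • (Complex.reCLM : ℂ →L[ℝ] ℝ) + (x - w).re • Complex.reCLM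
        + ((x - w).im • (Complex.imCLM : ℂ →L[ℝ] ℝ) + (x - w).im • Complex.imCLM)) x := by
    have := (hre.mul hre).add (him.mul him)
    convert this using 1 <;>
      first
      | (funext y; simp [Complex.normSq_apply])
      | abel
      | rfl
  have h2 := (Real.hasDerivAt_log hns).comp_hasFDerivAt x h1
  have h3 := h2.const_mul (2⁻¹ : ℝ)
  have heq : (fun y => Real.log (‖y - w‖))
      = fun y => 2⁻¹ * Real.log (Complex.normSq (y - w)) := by
    funext y
    rw [Complex.norm_def, Real.log_sqrt (Complex.normSq_nonneg _)]
    ring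
  have hd : dlog (x - w) = (2⁻¹ : ℝ) • ((Complex.normSq (x - w))⁻¹ •
      ((x - w).re • (Complex.reCLM : ℂ →L[ℝ] ℝ) + (x - w).re • Complex.reCLM
        + ((x - w).im • (Complex.imCLM : ℂ →L[ℝ] ℝ) + (x - w).im • Complex.imCLM))) := by
    ext v
    simp [dlog]
    ring
  rw [heq, hd]
  exact h3

/-- Lower bound for the radial derivative of the logarithmic potential
`u(z) = ∫_B log|z−w| dω*(w)` of a measure on the closed disc `B = B(z₀,τ)`:
for `|z−z₀| > τ`,
`∂u/∂r(z) ≥ (√(|z−z₀|−τ)/√(|z−z₀|+τ))·ω*(B)/|z−z₀| ≥ ω*(B)/|z−z₀| − τ·ω*(B)/|z−z₀|²`,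
and in particular `∂u/∂r(z) ≥ 0`. -/
theorem stmt5 (z₀ : ℂ) (τ : ℝ) (hτ : 0 < τ) (ω : Measure ℂ) [IsFiniteMeasure ω]
    (hsupp : ω (Metric.closedBall z₀ τ)ᶜ = 0)
    (u : ℂ → ℝ) (hu : ∀ z, u z = ∫ w, Real.log (‖z - w‖) ∂ω)
    (z : ℂ) (hz : τ < ‖z - z₀‖) :
    Real.sqrt (‖z - z₀‖ - τ) / Real.sqrt (‖z - z₀‖ + τ) *
        ((ω (Metric.closedBall z₀ τ)).toReal / ‖z - z₀‖) ≤
      fderiv ℝ u z ((z - z₀) / (‖z - z₀‖ : ℂ)) ∧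
    (ω (Metric.closedBall z₀ τ)).toReal / ‖z - z₀‖ -
        τ * (ω (Metric.closedBall z₀ τ)).toReal / ‖z - z₀‖ ^ 2 ≤
      Real.sqrt (‖z - z₀‖ - τ) / Real.sqrt (‖z - z₀‖ + τ) *
        ((ω (Metric.closedBall z₀ τ)).toReal / ‖z - z₀‖) ∧
    0 ≤ fderiv ℝ u z ((z - z₀) / (‖z - z₀‖ : ℂ)) := by
  set R : ℝ := ‖z - z₀‖ with hRdef
  set B : Set ℂ := Metric.closedBall z₀ τ with hBdef
  set M : ℝ := (ω B).toReal with hMdef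
  have hM0 : 0 ≤ M := ENNReal.toReal_nonneg
  have hR0 : 0 < R := lt_trans hτ hz
  have hRτ : 0 < R - τ := by linarith
  set δ : ℝ := (R - τ) / 2 with hδdef
  have hδ0 : 0 < δ := by positivity
  -- a.e. membership in B
  have ae_mem : ∀ᵐ w ∂ω, w ∈ B := by
    rw [MeasureTheory.ae_iff]
    simpa [Set.compl_def] using hsupp
  -- distance bound
  have hdist : ∀ w ∈ B, ∀ x ∈ Metric.ball z δ, δ ≤ ‖x - w‖ := by
    intro w hw x hx
    have h1 : ‖w - z₀‖ ≤ τ := by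
      simpa [Complex.dist_eq] using (Metric.mem_closedBall.mp hw)
    have h2 : ‖z - x‖ < δ := by
      have hx' := Metric.mem_ball.mp hx
      rw [Complex.dist_eq] at hx'
      rw [norm_sub_rev]
      exact hx'
    have h3 : R ≤ ‖z - x‖ + (‖x - w‖ + ‖w - z₀‖) := by
      calc R = ‖(z - x) + ((x - w) + (w - z₀))‖ := by rw [hRdef]; congr 1; ring
        _ ≤ _ := by
            refine le_trans (norm_add_le _ _) ?_
            exact add_le_add le_rfl (norm_add_le _ _)
    linarith
  -- derivative function bound
  have hbound : ∀ w ∈ B, ∀ x ∈ Metric.ball z δ, ‖dlog (x - w)‖ ≤ δ⁻¹ := by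
    intro w hw x hx
    refine le_trans (dlog_norm _) ?_
    exact inv_anti₀ hδ0 (hdist w hw x hx)
  -- measurability of the derivative family
  have hmeas' : AEStronglyMeasurable (fun w => dlog (z - w)) ω := by
    have hc1 : Measurable fun w : ℂ => (Complex.normSq (z - w))⁻¹ :=
      ((Complex.continuous_normSq.comp (continuous_const.sub continuous_id)).measurable).inv
    have hc2 : Continuous fun w : ℂ =>
        ((z - w).re • (Complex.reCLM : ℂ →L[ℝ] ℝ) + (z - w).im • Complex.imCLM) := by
      apply Continuous.add
      · exact (Complex.continuous_re.comp (continuous_const.sub continuous_id)).smul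
          continuous_const
      · exact (Complex.continuous_im.comp (continuous_const.sub continuous_id)).smul
          continuous_const
    exact hc1.aestronglyMeasurable.smul hc2.aestronglyMeasurable
  -- integrability of the derivative family
  have hint' : Integrable (fun w => dlog (z - w)) ω := by
    refine Integrable.mono' (integrable_const δ⁻¹) hmeas' ?_
    filter_upwards [ae_mem] with w hw
    exact hbound w hw z (Metric.mem_ball_self hδ0)
  -- integrability of the potential integrand
  have hint0 : Integrable (fun w => Real.log (‖z - w‖)) ω := by
    refine Integrable.mono' (integrable_const (|Real.log δ| + |Real.log (R + τ)|)) ?_ ?_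
    · exact (Real.measurable_log.comp
        (continuous_norm.comp (continuous_const.sub continuous_id)).measurable
        ).aestronglyMeasurable
    · filter_upwards [ae_mem] with w hw
      have hlow : δ ≤ ‖z - w‖ := hdist w hw z (Metric.mem_ball_self hδ0)
      have hup : ‖z - w‖ ≤ R + τ := by
        have h1 : ‖w - z₀‖ ≤ τ := by
          simpa [Complex.dist_eq] using (Metric.mem_closedBall.mp hw)
        calc ‖z - w‖ = ‖(z - z₀) + (z₀ - w)‖ := by congr 1; ring
          _ ≤ ‖z - z₀‖ + ‖z₀ - w‖ := norm_add_le _ _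
          _ ≤ R + τ := by
              rw [← hRdef]
              have : ‖z₀ - w‖ = ‖w - z₀‖ := norm_sub_rev _ _
              linarith
      have l1 : Real.log δ ≤ Real.log (‖z - w‖) :=
        Real.log_le_log hδ0 hlow
      have l2 : Real.log (‖z - w‖) ≤ Real.log (R + τ) :=
        Real.log_le_log (lt_of_lt_of_le hδ0 hlow) hup
      rw [Real.norm_eq_abs]
      rw [abs_le]
      constructor
      · have := neg_abs_le (Real.log δ); linarith [abs_nonneg (Real.log (R + τ))]
      · have := le_abs_self (Real.log (R + τ)); linarith [abs_nonneg (Real.log δ)]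
  -- the main derivative computation
  have hMain : HasFDerivAt (fun x => ∫ w, Real.log (‖x - w‖) ∂ω)
      (∫ w, dlog (z - w) ∂ω) z := by
    apply hasFDerivAt_integral_of_dominated_of_fderiv_le (F' := fun x w => dlog (x - w))
      (bound := fun _ => δ⁻¹) (Metric.ball_mem_nhds z hδ0)
    · filter_upwards with x
      exact (Real.measurable_log.comp
        (continuous_norm.comp (continuous_const.sub continuous_id)).measurable
        ).aestronglyMeasurable
    · exact hint0
    · exact hmeas'
    · filter_upwards [ae_mem] with w hw
      exact fun x hx => hbound w hw x hx
    · exact integrable_const _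
    · filter_upwards [ae_mem] with w hw
      intro x hx
      have hne : x ≠ w := by
        intro hxy
        have := hdist w hw x hx
        rw [hxy] at this
        simp at this
        linarith
      exact hasFDerivAt_log_abs w x hne
  have hu' : u = fun x => ∫ w, Real.log (‖x - w‖) ∂ω := funext hu
  have hfd : fderiv ℝ u z ((z - z₀) / (R : ℂ))
      = ∫ w, dlog (z - w) ((z - z₀) / (R : ℂ)) ∂ω := by
    rw [hu', hMain.fderiv]
    exact ContinuousLinearMap.integral_apply hint' _
  -- key sqrt inequalities
  have hs1 : Real.sqrt (R - τ) / Real.sqrt (R + τ) ≤ R / (R + τ) := by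
    have hsp : 0 < Real.sqrt (R + τ) := Real.sqrt_pos.mpr (by linarith)
    rw [div_le_div_iff₀ hsp (by linarith : (0:ℝ) < R + τ)]
    have h1 : Real.sqrt (R - τ) * (R + τ)
        = Real.sqrt (R - τ) * Real.sqrt (R + τ) * Real.sqrt (R + τ) := by
      rw [mul_assoc, Real.mul_self_sqrt (by linarith)]
    rw [h1, ← Real.sqrt_mul (le_of_lt hRτ)]
    have h2 : Real.sqrt ((R - τ) * (R + τ)) ≤ R := by
      have h3 : Real.sqrt ((R - τ) * (R + τ)) ≤ Real.sqrt (R ^ 2) :=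
        Real.sqrt_le_sqrt (by nlinarith)
      rwa [Real.sqrt_sq hR0.le] at h3
    exact mul_le_mul_of_nonneg_right h2 hsp.le
  -- pointwise lower bound for the integrand
  have hpt : ∀ w ∈ B, Real.sqrt (R - τ) / Real.sqrt (R + τ) * R⁻¹
      ≤ dlog (z - w) ((z - z₀) / (R : ℂ)) := by
    intro w hw
    have hb : ‖w - z₀‖ ≤ τ := by
      simpa [Complex.dist_eq] using (Metric.mem_closedBall.mp hw)
    set a : ℂ := z - z₀ with ha
    set b : ℂ := w - z₀ with hb'
    have hzw : z - w = a - b := by rw [ha, hb']; ring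
    set t : ℝ := a.re * b.re + a.im * b.im with ht
    set s : ℝ := Complex.normSq b with hs
    have hst : s ≤ τ ^ 2 := by
      rw [hs, ← Complex.sq_norm]
      exact pow_le_pow_left₀ (norm_nonneg _) hb 2
    have htb : |t| ≤ R * τ := by
      have := cs_aux a b
      rw [← hRdef] at this
      calc |t| = |a.re * b.re + a.im * b.im| := by rw [ht]
        _ ≤ ‖a‖ * ‖b‖ := this
        _ ≤ R * τ := by
            rw [← hRdef]
            exact mul_le_mul_of_nonneg_left hb (norm_nonneg _)
    have hRsq : Complex.normSq a = R ^ 2 := by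
      rw [← Complex.sq_norm, hRdef]
    have hre2 : a.re * a.re + a.im * a.im = R ^ 2 := by
      rw [← Complex.normSq_apply]; exact hRsq
    have hNS : Complex.normSq (a - b) = R ^ 2 + s - 2 * t := by
      rw [Complex.normSq_apply, Complex.sub_re, Complex.sub_im, ht, hs,
        Complex.normSq_apply]
      linear_combination hre2
    have hden : 0 < R ^ 2 + s - 2 * t := by
      rw [← hNS]
      have hab : a - b ≠ 0 := by
        rw [← hzw]
        intro hc
        have habs : ‖z - w‖ = 0 := by rw [hc]; simp
        have hlo := hdist w hw z (Metric.mem_ball_self hδ0)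
        rw [habs] at hlo; linarith
      exact Complex.normSq_pos.mpr hab
    -- compute the integrand value
    have hval : dlog (z - w) ((z - z₀) / (R : ℂ))
        = (R ^ 2 + s - 2 * t)⁻¹ * ((R ^ 2 - t) / R) := by
      rw [dlog_apply, hzw, hNS, ← ha]
      rw [Complex.div_ofReal_re, Complex.div_ofReal_im, Complex.sub_re, Complex.sub_im]
      have hX : (a.re - b.re) * (a.re / R) + (a.im - b.im) * (a.im / R)
          = (R ^ 2 - t) / R := by
        rw [ht]
        field_simp
        linear_combination hre2
      rw [hX]
    rw [hval]
    -- now the purely real inequality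
    have step1 : R / (R + τ) ≤ (R ^ 2 - t) / (R ^ 2 + s - 2 * t) := by
      rw [div_le_div_iff₀ (by linarith) hden]
      have ht1 : -(R * τ) ≤ t := (abs_le.mp htb).1
      nlinarith
    have step2 : Real.sqrt (R - τ) / Real.sqrt (R + τ)
        ≤ (R ^ 2 - t) / (R ^ 2 + s - 2 * t) := le_trans hs1 step1
    calc Real.sqrt (R - τ) / Real.sqrt (R + τ) * R⁻¹
        ≤ (R ^ 2 - t) / (R ^ 2 + s - 2 * t) * R⁻¹ :=
          mul_le_mul_of_nonneg_right step2 (by positivity)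
      _ = (R ^ 2 + s - 2 * t)⁻¹ * ((R ^ 2 - t) / R) := by
          field_simp
  -- integrate the pointwise bound
  have hωuniv : ω Set.univ = ω B := by
    have := measure_add_measure_compl (μ := ω) (measurableSet_closedBall : MeasurableSet B)
    rw [hsupp, add_zero] at this
    exact this.symm
  have hintv : Integrable (fun w => dlog (z - w) ((z - z₀) / (R : ℂ))) ω :=
    hint'.apply_continuousLinearMap _
  have hlow : Real.sqrt (R - τ) / Real.sqrt (R + τ) * (M / R)
      ≤ ∫ w, dlog (z - w) ((z - z₀) / (R : ℂ)) ∂ω := by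
    have hci : Integrable (fun _ : ℂ => Real.sqrt (R - τ) / Real.sqrt (R + τ) * R⁻¹) ω :=
      integrable_const _
    have := integral_mono_ae hci hintv (by
      filter_upwards [ae_mem] with w hw
      exact hpt w hw)
    rw [integral_const] at this
    have hmeq : ω.real Set.univ = M := by rw [measureReal_def, hωuniv, hMdef]
    rw [hmeq] at this
    calc Real.sqrt (R - τ) / Real.sqrt (R + τ) * (M / R)
        = M • (Real.sqrt (R - τ) / Real.sqrt (R + τ) * R⁻¹) := by
          rw [smul_eq_mul]; ring
      _ ≤ _ := this
  rw [hfd]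
  refine ⟨hlow, ?_, ?_⟩
  · -- second inequality
    have key : (R - τ) / R ≤ Real.sqrt (R - τ) / Real.sqrt (R + τ) := by
      rw [← Real.sqrt_div hRτ.le]
      rw [Real.le_sqrt (by positivity) (by positivity)]
      rw [div_pow, div_le_div_iff₀ (by positivity) (by linarith)]
      nlinarith [mul_nonneg hRτ.le (mul_nonneg hτ.le hτ.le)]
    have expand : M / R - τ * M / R ^ 2 = (R - τ) / R * (M / R) := by
      field_simp
    rw [expand]
    exact mul_le_mul_of_nonneg_right key (by positivity)
  · refine le_trans ?_ hlow
    exact mul_nonneg (by positivity) (div_nonneg hM0 hR0.le)
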